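/- For every integer q ≥ 1, χ(H_q) ≤ q, where H_q is the subgraph of G_q induced on vectors that are concatenations of q permutations of [q]. Specifically, the q sets A_{1,q+i} = {u ∈ V(H_q) : u_1 = u_{q+i}} for i ∈ [q] are independent sets covering V(H_q). -/

import Mathlib

/-- The index of position t of the i-th block of length q inside [q²]. -/
def blockIdx (q : ℕ) (i t : Fin q) : Fin (q ^ 2) :=
  ⟨(i : ℕ) * q + (t : ℕ), by
    have h1 := i.isLt
    have h2 := t.isLt
    calc (i : ℕ) * q + (t : ℕ) < (i : ℕ) * q + q := by omega
      _ = ((i : ℕ) + 1) * q := by ring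
      _ ≤ q * q := Nat.mul_le_mul_right q h1
      _ = q ^ 2 := (pow_two q).symm⟩

/-- u ∈ [q]^{q²} is a concatenation of q permutations of [q]: each block of length q is a
permutation of [q]. -/
def IsPermConcat (q : ℕ) (u : Fin (q ^ 2) → Fin q) : Prop :=
  ∀ i : Fin q, Function.Bijective fun t : Fin q => u (blockIdx q i t)

/-- The graph H_q: the subgraph of G_q induced on the concatenations of q permutations;
u ~ v iff the pairs (u_i, v_i) over i ∈ [q²] exhaust all of [q]×[q]. -/
def Hq (q : ℕ) : SimpleGraph {u : Fin (q ^ 2) → Fin q // IsPermConcat q u} where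
  Adj u v := u ≠ v ∧ Function.Surjective (fun i : Fin (q ^ 2) => (u.val i, v.val i))
  symm := by
    constructor
    rintro u v ⟨hne, hs⟩
    refine ⟨hne.symm, fun p => ?_⟩
    obtain ⟨i, hi⟩ := hs (p.2, p.1)
    rw [Prod.ext_iff] at hi
    exact ⟨i, by rw [Prod.ext_iff]; exact ⟨hi.2, hi.1⟩⟩
  loopless := by constructor; rintro u ⟨hne, _⟩; exact hne rfl

/-- For every q ≥ 1, χ(H_q) ≤ q. -/
theorem stmt15 (q : ℕ) (hq : 1 ≤ q) :
    (Hq q).chromaticNumber ≤ (q : ℕ) := by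
  have hq0 : 0 < q := hq
  -- handle q = 1 via subsingleton? unify: define coloring
  set i1 : Fin q := ⟨1 % q, Nat.mod_lt _ hq0⟩ with hi1
  set z : Fin q := ⟨0, hq0⟩ with hz
  refine SimpleGraph.Colorable.chromaticNumber_le ?_
  refine ⟨⟨fun u => (Equiv.ofBijective _ (u.2 i1)).symm (u.1 (blockIdx q z z)), ?_⟩⟩
  rintro u v ⟨hne, hs⟩ hcol
  -- injectivity of pair map
  have hbij : Function.Bijective (fun i : Fin (q ^ 2) => (u.val i, v.val i)) := by
    rw [Fintype.bijective_iff_surjective_and_card]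
    refine ⟨hs, ?_⟩
    simp [sq]
  rcases Nat.lt_or_ge q 2 with h2 | h2
  · -- q = 1 : vertex type is subsingleton
    interval_cases q
    exact hne (Subtype.ext (funext fun i => Subsingleton.elim _ _))
  · set t := (Equiv.ofBijective _ (u.2 i1)).symm (u.1 (blockIdx q z z)) with ht
    have hu : u.1 (blockIdx q i1 t) = u.1 (blockIdx q z z) := by
      have := (Equiv.ofBijective _ (u.2 i1)).apply_symm_apply (u.1 (blockIdx q z z))
      exact this
    have ht' : t = (Equiv.ofBijective _ (v.2 i1)).symm (v.1 (blockIdx q z z)) := hcol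
    have hv : v.1 (blockIdx q i1 t) = v.1 (blockIdx q z z) := by
      rw [ht']
      have := (Equiv.ofBijective _ (v.2 i1)).apply_symm_apply (v.1 (blockIdx q z z))
      simpa [Equiv.ofBijective] using this
    have heq : blockIdx q i1 t = blockIdx q z z :=
      hbij.injective (by simp [hu, hv])
    have : (i1 : ℕ) * q + (t : ℕ) = (z : ℕ) * q + (z : ℕ) := congrArg Fin.val heq
    have h1q : (1 % q) = 1 := Nat.mod_eq_of_lt h2
    simp [hi1, hz, h1q] at this
    omega
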